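/- If all inputs m_i to the local BP operator R are log-concave finitely supported probability distributions on ℕ with 0 in their supports, then the output R[m] is log-concave, where R[m](x) = 1(x ≤ c)·Σ_{|y| ≤ b−x} Π_i m_i(y_i) / Σ_{t ≤ c} Σ_{|y| ≤ b−t} Π_i m_i(y_i). -/

import Mathlib

/-- `p` is a finitely supported probability distribution on ℕ. -/
def IsDist (p : ℕ → ℝ) : Prop :=
  (∀ x, 0 ≤ p x) ∧ (Function.support p).Finite ∧ ∑' x, p x = 1

/-- The support of `p` is an interval of ℕ. -/
def SuppInterval (p : ℕ → ℝ) : Prop :=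
  ∀ i j k : ℕ, i ≤ j → j ≤ k → p i ≠ 0 → p k ≠ 0 → p j ≠ 0

/-- `p` is log-concave. -/
def LogConcave (p : ℕ → ℝ) : Prop :=
  SuppInterval p ∧ ∀ i : ℕ, p i * p (i + 2) ≤ p (i + 1) ^ 2

/-- Generalized log-concavity (TP₂) for sequences on ℤ. -/
def LC2 (f : ℤ → ℝ) : Prop :=
  ∀ a b c d : ℤ, a + d = b + c → a ≤ b → a ≤ c → f a * f d ≤ f b * f c

/-- Extend a sequence on ℕ to ℤ by zero. -/
noncomputable def extZ (p : ℕ → ℝ) (k : ℤ) : ℝ := if 0 ≤ k then p k.toNat else 0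

lemma extZ_nonneg (p : ℕ → ℝ) (h : ∀ x, 0 ≤ p x) (k : ℤ) : 0 ≤ extZ p k := by
  unfold extZ; split <;> simp [h]

lemma step_lemma (p : ℕ → ℝ) (hloc : ∀ i : ℕ, p i * p (i + 2) ≤ p (i + 1) ^ 2) :
    ∀ n a : ℕ, (∀ j, a ≤ j → j ≤ a + n + 2 → 0 < p j) →
      p a * p (a + n + 2) ≤ p (a + 1) * p (a + n + 1) := by
  intro n
  induction n with
  | zero =>
    intro a hpos
    have := hloc a
    nlinarith [this]
  | succ n ih =>
    intro a hpos
    have hpos' : ∀ j, a ≤ j → j ≤ a + n + 2 → 0 < p j := fun j h1 h2 => hpos j h1 (by omega)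
    have h1 := ih a hpos'
    have h2 := hloc (a + n + 1)
    have e1 : a + n + 1 + 2 = a + (n + 1) + 2 := by omega
    have e2 : a + n + 1 + 1 = a + n + 2 := by omega
    rw [e1, e2] at h2
    have hp2 : 0 < p (a + n + 2) := hpos _ (by omega) (by omega)
    have hp1 : 0 < p (a + 1) := hpos _ (by omega) (by omega)
    have hp3 : 0 ≤ p (a + (n+1) + 2) := (hpos _ (by omega) (by omega)).le
    have hpn1 : 0 < p (a + n + 1) := hpos _ (by omega) (by omega)
    -- want : p a * p (a+n+3) ≤ p (a+1) * p (a+n+2)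
    have key : (p a * p (a + (n+1) + 2)) * p (a + n + 2) ≤ (p (a + 1) * p (a + (n+1) + 1)) * p (a + n + 2) := by
      have e3 : a + (n+1) + 1 = a + n + 2 := by omega
      rw [e3]
      nlinarith [mul_le_mul_of_nonneg_right h1 hp3, mul_le_mul_of_nonneg_left h2 hp1.le]
    exact le_of_mul_le_mul_right key hp2

lemma quad_lemma (p : ℕ → ℝ) (hloc : ∀ i : ℕ, p i * p (i + 2) ≤ p (i + 1) ^ 2) :
    ∀ k e a : ℕ, (∀ j, a ≤ j → j ≤ a + (2 * k + e) → 0 < p j) →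
      p a * p (a + (2 * k + e)) ≤ p (a + k) * p (a + k + e) := by
  intro k
  induction k with
  | zero => intro e a _; norm_num
  | succ k ih =>
    intro e a hpos
    have h1 : p a * p (a + (2 * k + e) + 2) ≤ p (a + 1) * p (a + (2 * k + e) + 1) := by
      apply step_lemma p hloc (2 * k + e) a
      intro j hj1 hj2; exact hpos j hj1 (by omega)
    have h2 : p (a + 1) * p ((a + 1) + (2 * k + e)) ≤ p ((a + 1) + k) * p ((a + 1) + k + e) := by
      apply ih e (a + 1)
      intro j hj1 hj2; exact hpos j (by omega) (by omega)
    have e1 : a + (2 * (k + 1) + e) = a + (2 * k + e) + 2 := by omega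
    have e2 : (a + 1) + (2 * k + e) = a + (2 * k + e) + 1 := by omega
    have e3 : (a + 1) + k = a + (k + 1) := by omega
    rw [e1]
    rw [e2, e3] at h2
    exact le_trans h1 h2

lemma nat_quad (p : ℕ → ℝ) (hnn : ∀ x, 0 ≤ p x) (hlc : LogConcave p)
    (a b c d : ℕ) (hsum : a + d = b + c) (hab : a ≤ b) (hbc : b ≤ c)
    (ha : p a ≠ 0) (hd : p d ≠ 0) : p a * p d ≤ p b * p c := by
  have hcd : c ≤ d := by omega
  have hpos : ∀ j, a ≤ j → j ≤ d → 0 < p j := by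
    intro j h1 h2
    exact lt_of_le_of_ne (hnn j) (Ne.symm (hlc.1 a j d h1 h2 ha hd))
  have hb : b = a + (b - a) := by omega
  have hc : c = a + (b - a) + (c - b) := by omega
  have hd' : d = a + (2 * (b - a) + (c - b)) := by omega
  rw [hb, hc, hd']
  apply quad_lemma p hlc.2 (b - a) (c - b) a
  intro j h1 h2
  exact hpos j h1 (by omega)

lemma extZ_LC2 (p : ℕ → ℝ) (hnn : ∀ x, 0 ≤ p x) (hlc : LogConcave p) : LC2 (extZ p) := by
  intro a b c d hsum hab hac
  by_cases ha : extZ p a = 0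
  · rw [ha, zero_mul]
    exact mul_nonneg (extZ_nonneg p hnn b) (extZ_nonneg p hnn c)
  by_cases hd : extZ p d = 0
  · rw [hd, mul_zero]
    exact mul_nonneg (extZ_nonneg p hnn b) (extZ_nonneg p hnn c)
  have ha0 : 0 ≤ a := by by_contra h; exact ha (by simp [extZ, h])
  have hd0 : 0 ≤ d := by by_contra h; exact hd (by simp [extZ, h])
  have hb0 : 0 ≤ b := le_trans ha0 hab
  have hc0 : 0 ≤ c := le_trans ha0 hac
  have hpa : p a.toNat ≠ 0 := by simpa [extZ, ha0] using ha
  have hpd : p d.toNat ≠ 0 := by simpa [extZ, hd0] using hd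
  have eB : extZ p b = p b.toNat := by simp [extZ, hb0]
  have eC : extZ p c = p c.toNat := by simp [extZ, hc0]
  have eA : extZ p a = p a.toNat := by simp [extZ, ha0]
  have eD : extZ p d = p d.toNat := by simp [extZ, hd0]
  rw [eA, eB, eC, eD]
  have hsum' : a.toNat + d.toNat = b.toNat + c.toNat := by omega
  rcases le_total b c with h | h
  · exact nat_quad p hnn hlc _ _ _ _ hsum' (by omega) (by omega) hpa hpd
  · rw [mul_comm (p b.toNat)]
    exact nat_quad p hnn hlc a.toNat c.toNat b.toNat d.toNat (by omega) (by omega) (by omega) hpa hpd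


lemma conv_LC2 (f g : ℤ → ℝ) (hf0 : ∀ k, 0 ≤ f k) (hg0 : ∀ k, 0 ≤ g k)
    (hf : LC2 f) (hg : LC2 g) (T : Finset ℤ) (hT : ∀ k, f k ≠ 0 → k ∈ T) :
    LC2 (fun t => ∑ k ∈ T, f k * g (t - k)) := by
  intro a b c d hsum hab hac
  simp only
  set s : ℤ := b - a with hs
  have hs0 : 0 ≤ s := by omega
  have hbd : b ≤ d := by omega
  set em : ℤ ↪ ℤ := ⟨fun k => k + s, fun x y h => by simpa using h⟩ with hem
  set U : Finset ℤ := T ∪ T.map em with hU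
  have hTU : T ⊆ U := Finset.subset_union_left
  have convU : ∀ t : ℤ, ∑ k ∈ T, f k * g (t - k) = ∑ k ∈ U, f k * g (t - k) := by
    intro t
    apply Finset.sum_subset hTU
    intro k _ hk
    have : f k = 0 := by by_contra h; exact hk (hT k h)
    simp [this]
  have shiftEq : ∀ t : ℤ, ∑ k ∈ T, f k * g (t - k) = ∑ k ∈ U, f (k - s) * g (t + s - k) := by
    intro t
    have h1 : ∑ k ∈ U, f (k - s) * g (t + s - k) = ∑ k ∈ T.map em, f (k - s) * g (t + s - k) := by
      symm
      apply Finset.sum_subset Finset.subset_union_right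
      intro k _ hk
      have : f (k - s) = 0 := by
        by_contra h
        exact hk (by simp [hem, Finset.mem_map]; exact ⟨k - s, hT _ h, by show k - s + s = k; omega⟩)
      simp [this]
    rw [h1, Finset.sum_map]
    apply Finset.sum_congr rfl
    intro j _
    simp only [hem, Function.Embedding.coeFn_mk]
    show f j * g (t - j) = f (j + s - s) * g (t + s - (j + s))
    ring_nf
  -- abbreviations
  set A : ℤ → ℝ := f with hA
  set B : ℤ → ℝ := fun k => f (k - s) with hB
  set C : ℤ → ℝ := fun k => g (b - k) with hC
  set D : ℤ → ℝ := fun k => g (d - k) with hD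
  have eB : ∑ k ∈ T, f k * g (b - k) = ∑ k ∈ U, A k * C k := convU b
  have eD : ∑ k ∈ T, f k * g (d - k) = ∑ k ∈ U, A k * D k := convU d
  have eA : ∑ k ∈ T, f k * g (a - k) = ∑ k ∈ U, B k * C k := by
    have := shiftEq a
    have e : a + s = b := by omega
    rw [e] at this
    exact this
  have eC : ∑ k ∈ T, f k * g (c - k) = ∑ k ∈ U, B k * D k := by
    have := shiftEq c
    have e : c + s = d := by omega
    rw [e] at this
    exact this
  have term_nonneg : ∀ k l : ℤ, 0 ≤ (A k * B l - A l * B k) * (C k * D l - C l * D k) := by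
    have H : ∀ k l : ℤ, k ≤ l → 0 ≤ (A k * B l - A l * B k) * (C k * D l - C l * D k) := by
      intro k l hkl
      apply mul_nonneg
      · have := hf (k - s) k (l - s) l (by omega) (by omega) (by omega)
        simp only [hA, hB]
        linarith
      · have := hg (b - l) (b - k) (d - l) (d - k) (by omega) (by omega) (by omega)
        simp only [hC, hD]
        linarith
    intro k l
    rcases le_total k l with h | h
    · exact H k l h
    · have h2 := H l k h
      have e : (A l * B k - A k * B l) * (C l * D k - C k * D l)
          = (A k * B l - A l * B k) * (C k * D l - C l * D k) := by ring
      linarith [h2, e ▸ h2]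
  have key : ∑ k ∈ U, ∑ l ∈ U, (A k * B l - A l * B k) * (C k * D l - C l * D k)
      = 2 * ((∑ k ∈ U, A k * C k) * (∑ k ∈ U, B k * D k)
           - (∑ k ∈ U, A k * D k) * (∑ k ∈ U, B k * C k)) := by
    have e1 : ∀ k l : ℤ, (A k * B l - A l * B k) * (C k * D l - C l * D k)
        = ((A k * C k) * (B l * D l) - (A k * D k) * (B l * C l))
          + ((A l * C l) * (B k * D k) - (A l * D l) * (B k * C k)) := by
      intro k l; ring
    calc ∑ k ∈ U, ∑ l ∈ U, (A k * B l - A l * B k) * (C k * D l - C l * D k)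
        = ∑ k ∈ U, ∑ l ∈ U, (((A k * C k) * (B l * D l) - (A k * D k) * (B l * C l))
          + ((A l * C l) * (B k * D k) - (A l * D l) * (B k * C k))) := by
          apply Finset.sum_congr rfl; intro k _; apply Finset.sum_congr rfl; intro l _; exact e1 k l
      _ = (∑ k ∈ U, ∑ l ∈ U, ((A k * C k) * (B l * D l) - (A k * D k) * (B l * C l)))
          + ∑ k ∈ U, ∑ l ∈ U, ((A l * C l) * (B k * D k) - (A l * D l) * (B k * C k)) := by
          rw [← Finset.sum_add_distrib]
          apply Finset.sum_congr rfl; intro k _; rw [← Finset.sum_add_distrib]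
      _ = 2 * ∑ k ∈ U, ∑ l ∈ U, ((A k * C k) * (B l * D l) - (A k * D k) * (B l * C l)) := by
          rw [Finset.sum_comm (s := U) (t := U)
            (f := fun k l => (A l * C l) * (B k * D k) - (A l * D l) * (B k * C k))]
          ring
      _ = 2 * ((∑ k ∈ U, A k * C k) * (∑ k ∈ U, B k * D k)
           - (∑ k ∈ U, A k * D k) * (∑ k ∈ U, B k * C k)) := by
          congr 1
          rw [Finset.sum_mul_sum U U (fun k => A k * C k) (fun l => B l * D l),
              Finset.sum_mul_sum U U (fun k => A k * D k) (fun l => B l * C l)]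
          rw [← Finset.sum_sub_distrib]
          apply Finset.sum_congr rfl; intro k _
          rw [← Finset.sum_sub_distrib]
  have hnn : 0 ≤ ∑ k ∈ U, ∑ l ∈ U, (A k * B l - A l * B k) * (C k * D l - C l * D k) :=
    Finset.sum_nonneg fun k _ => Finset.sum_nonneg fun l _ => term_nonneg k l
  rw [eA, eB, eC, eD]
  nlinarith [key, hnn]


noncomputable def RZ {ι : Type*} [Fintype ι] (m : ι → ℕ → ℝ) (t : ℤ) : ℝ :=
  ∑' y : ι → ℕ, if (∑ i, (y i : ℤ)) ≤ t then ∏ i, m i (y i) else 0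

section RZlemmas
variable {ι : Type*} [Fintype ι] [DecidableEq ι]

lemma RZ_summand_zero (m : ι → ℕ → ℝ) (hfin : ∀ i, (Function.support (m i)).Finite) (t : ℤ)
    (y : ι → ℕ) (hy : y ∉ Fintype.piFinset fun i => (hfin i).toFinset) :
    (if (∑ i, (y i : ℤ)) ≤ t then ∏ i, m i (y i) else 0) = 0 := by
  rw [Fintype.mem_piFinset] at hy
  push_neg at hy
  obtain ⟨i, hi⟩ := hy
  have : m i (y i) = 0 := by
    by_contra h
    exact hi ((hfin i).mem_toFinset.mpr h)
  have hprod : ∏ j, m j (y j) = 0 := Finset.prod_eq_zero (Finset.mem_univ i) this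
  split <;> simp [hprod]

lemma RZ_summable (m : ι → ℕ → ℝ) (hfin : ∀ i, (Function.support (m i)).Finite) (t : ℤ) :
    Summable (fun y : ι → ℕ => if (∑ i, (y i : ℤ)) ≤ t then ∏ i, m i (y i) else 0) := by
  exact summable_of_ne_finset_zero (s := Fintype.piFinset fun i => (hfin i).toFinset)
    (fun y hy => RZ_summand_zero m hfin t y hy)

lemma RZ_nonneg (m : ι → ℕ → ℝ) (hnn : ∀ i x, 0 ≤ m i x) (t : ℤ) : 0 ≤ RZ m t := by
  apply tsum_nonneg
  intro y
  split
  · exact Finset.prod_nonneg fun i _ => hnn i _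
  · exact le_refl 0

omit [DecidableEq ι] in
lemma RZ_neg (m : ι → ℕ → ℝ) (t : ℤ) (ht : t < 0) : RZ m t = 0 := by
  unfold RZ
  convert tsum_zero with y
  have : 0 ≤ ∑ i, ((y i : ℤ)) := Finset.sum_nonneg fun i _ => Int.natCast_nonneg _
  rw [if_neg (by omega)]

lemma RZ_pos (m : ι → ℕ → ℝ) (hnn : ∀ i x, 0 ≤ m i x)
    (hfin : ∀ i, (Function.support (m i)).Finite) (h0 : ∀ i, 0 < m i 0)
    (t : ℤ) (ht : 0 ≤ t) : 0 < RZ m t := by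
  have hsum := RZ_summable m hfin t
  have hle := Summable.le_tsum hsum (fun _ => 0) (fun y _ => by
    split
    · exact Finset.prod_nonneg fun i _ => hnn i _
    · exact le_refl 0)
  have hval : (if (∑ i, (((fun _ : ι => 0) i : ℕ) : ℤ)) ≤ t then ∏ i, m i 0 else 0)
      = ∏ i, m i 0 := by
    rw [if_pos (by simpa using ht)]
  calc (0:ℝ) < ∏ i, m i 0 := Finset.prod_pos fun i _ => h0 i
    _ ≤ RZ m t := by rw [← hval]; exact hle

end RZlemmas

section OptionStep
variable {ι : Type*} [Fintype ι]

set_option maxHeartbeats 1000000 in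
lemma RZ_option (M : Option ι → ℕ → ℝ)
    (hfin : ∀ i, (Function.support (M i)).Finite) (t : ℤ) :
    RZ M t = ∑ k ∈ (hfin none).toFinset.map ⟨(Nat.cast : ℕ → ℤ), Nat.cast_injective⟩,
      (fun k : ℤ => if 0 ≤ k then M none k.toNat else 0) k * RZ (fun i => M (some i)) (t - k) := by
  classical
  set m' : ι → ℕ → ℝ := fun i => M (some i) with hm'
  set F : (Option ι → ℕ) → ℝ :=
    fun y => if (∑ i, (y i : ℤ)) ≤ t then ∏ i, M i (y i) else 0 with hF
  set e : (Option ι → ℕ) ≃ ℕ × (ι → ℕ) := Equiv.piOptionEquivProd with he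
  have hFval : ∀ (j : ℕ) (y : ι → ℕ), F (e.symm (j, y)) =
      M none j * (if (∑ i, (y i : ℤ)) ≤ t - (j : ℤ) then ∏ i, m' i (y i) else 0) := by
    intro j y
    have hnone : (e.symm (j, y)) none = j := rfl
    have hsome : ∀ i, (e.symm (j, y)) (some i) = y i := fun i => rfl
    have hsumEq : (∑ o : Option ι, ((e.symm (j, y)) o : ℤ)) = (j : ℤ) + ∑ i, (y i : ℤ) := by
      rw [Fintype.sum_option]
      simp [hnone, hsome]
    have hprodEq : (∏ o : Option ι, M o ((e.symm (j, y)) o)) = M none j * ∏ i, m' i (y i) := by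
      rw [Fintype.prod_option]
      simp [hnone, hsome, hm']
    simp only [hF, hsumEq, hprodEq]
    by_cases hc : (∑ i, (y i : ℤ)) ≤ t - (j : ℤ)
    · rw [if_pos (by omega), if_pos hc]
    · rw [if_neg (by omega), if_neg hc, mul_zero]
  have hsumm : Summable F := RZ_summable M hfin t
  have hsumm2 : Summable (fun p : ℕ × (ι → ℕ) => F (e.symm p)) :=
    (Equiv.summable_iff e.symm).mpr hsumm
  have hsumm3 : ∀ j : ℕ, Summable (fun y : ι → ℕ => F (e.symm (j, y))) := by
    intro j
    have : (fun y : ι → ℕ => F (e.symm (j, y))) =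
        fun y => M none j * (if (∑ i, (y i : ℤ)) ≤ t - (j:ℤ) then ∏ i, m' i (y i) else 0) := by
      funext y; exact hFval j y
    rw [this]
    exact (RZ_summable m' (fun i => hfin (some i)) (t - j)).mul_left _
  have step1 : RZ M t = ∑' p : ℕ × (ι → ℕ), F (e.symm p) := (Equiv.tsum_eq e.symm F).symm
  have step2 : ∑' p : ℕ × (ι → ℕ), F (e.symm p) = ∑' j : ℕ, ∑' y : ι → ℕ, F (e.symm (j, y)) :=
    Summable.tsum_prod' hsumm2 hsumm3
  have step3 : ∀ j : ℕ, ∑' y : ι → ℕ, F (e.symm (j, y)) = M none j * RZ m' (t - j) := by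
    intro j
    calc ∑' y : ι → ℕ, F (e.symm (j, y))
        = ∑' y : ι → ℕ, M none j * (if (∑ i, (y i : ℤ)) ≤ t - (j:ℤ) then ∏ i, m' i (y i) else 0) := by
          exact tsum_congr fun y => hFval j y
      _ = M none j * RZ m' (t - j) := by rw [tsum_mul_left]; rfl
  have step4 : ∑' j : ℕ, M none j * RZ m' (t - j)
      = ∑ j ∈ (hfin none).toFinset, M none j * RZ m' (t - j) := by
    apply tsum_eq_sum
    intro j hj
    have : M none j = 0 := by
      by_contra h
      exact hj ((hfin none).mem_toFinset.mpr h)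
    simp [this]
  rw [step1, step2]
  rw [tsum_congr step3, step4, Finset.sum_map]
  apply Finset.sum_congr rfl
  intro j _
  simp
end OptionStep

/-- Numerator of the BP operator. -/
noncomputable def Rnum {ι : Type*} [Fintype ι] (b : ℕ) (m : ι → ℕ → ℝ) (x : ℕ) : ℝ :=
  ∑' y : ι → ℕ, if (∑ i, y i) + x ≤ b then ∏ i, m i (y i) else 0

/-- The local BP operator with vertex capacity `b` and edge capacity `c`. -/
noncomputable def Rop {ι : Type*} [Fintype ι] (b c : ℕ) (m : ι → ℕ → ℝ) (x : ℕ) : ℝ :=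
  (if x ≤ c then Rnum b m x else 0) / ∑ t ∈ Finset.range (c + 1), Rnum b m t

universe u

theorem RZ_LC2 (ι : Type u) [Fintype ι] : ∀ (m : ι → ℕ → ℝ),
    (∀ i, (∀ x, 0 ≤ m i x) ∧ (Function.support (m i)).Finite ∧ LogConcave (m i)) →
    LC2 (RZ m) := by
  refine Fintype.induction_empty_option
    (P := fun α _ => ∀ m : α → ℕ → ℝ,
      (∀ i, (∀ x, 0 ≤ m i x) ∧ (Function.support (m i)).Finite ∧ LogConcave (m i)) →
      LC2 (RZ m)) ?_ ?_ ?_ ι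
  · intro α β _ e ih m hm
    letI : Fintype α := Fintype.ofEquiv β e.symm
    have heq : ∀ t, RZ m t = RZ (fun i => m (e i)) t := by
      intro t
      set E : (α → ℕ) ≃ (β → ℕ) := e.arrowCongr (Equiv.refl ℕ) with hE
      refine ((Equiv.tsum_eq E (fun y : β → ℕ =>
        if (∑ j, (y j : ℤ)) ≤ t then ∏ j, m j (y j) else 0)).symm).trans (tsum_congr ?_)
      intro z
      have hEz : ∀ j : β, (E z) j = z (e.symm j) := fun j => rfl
      have hs : (∑ j, ((E z) j : ℤ)) = ∑ i, (z i : ℤ) := by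
        rw [Fintype.sum_equiv e (fun i => ((z i : ℕ) : ℤ)) (fun j => ((E z) j : ℤ))
          (fun i => by simp [hEz])]
      have hp : (∏ j, m j ((E z) j)) = ∏ i, m (e i) (z i) := by
        rw [Fintype.prod_equiv e (fun i => m (e i) (z i)) (fun j => m j ((E z) j))
          (fun i => by simp [hEz])]
      rw [hs, hp]
    have : RZ m = RZ (fun i => m (e i)) := funext heq
    rw [this]
    exact ih (fun i => m (e i)) (fun i => hm (e i))
  · intro m _
    have heq : ∀ t, RZ m t = if (0:ℤ) ≤ t then 1 else 0 := by
      intro t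
      rw [RZ]
      rw [tsum_eq_single (fun _ => 0) (fun y hy => absurd (Subsingleton.elim y _) hy)]
      simp
    intro a b c d hsum hab hac
    rw [heq a, heq b, heq c, heq d]
    rcases le_or_gt 0 a with h | h
    · rw [if_pos h, if_pos (by omega), if_pos (by omega), if_pos (by omega)]
    · rw [if_neg (by omega), zero_mul]
      apply mul_nonneg <;> split <;> norm_num
  · intro α _ ih M hM
    classical
    have hfin : ∀ i, (Function.support (M i)).Finite := fun i => (hM i).2.1
    set m' : α → ℕ → ℝ := fun i => M (some i) with hm'
    set T : Finset ℤ := (hfin none).toFinset.map ⟨(Nat.cast : ℕ → ℤ), Nat.cast_injective⟩ with hT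
    have heq : ∀ t, RZ M t = ∑ k ∈ T, extZ (M none) k * RZ m' (t - k) := by
      intro t
      rw [RZ_option M hfin t]
      rfl
    have hconv := conv_LC2 (extZ (M none)) (RZ m')
      (extZ_nonneg _ (hM none).1)
      (RZ_nonneg m' (fun i x => (hM (some i)).1 x))
      (extZ_LC2 _ (hM none).1 (hM none).2.2)
      (ih m' (fun i => hM (some i)))
      T
      (by
        intro k hk
        have hk0 : 0 ≤ k := by
          by_contra h
          exact hk (by simp [extZ, h])
        have : M none k.toNat ≠ 0 := by simpa [extZ, hk0] using hk
        rw [hT, Finset.mem_map]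
        exact ⟨k.toNat, (hfin none).mem_toFinset.mpr this, by simp; omega⟩)
    intro a b c d hsum hab hac
    rw [heq a, heq b, heq c, heq d]
    exact hconv a b c d hsum hab hac

theorem Rop_logConcave {ι : Type*} [Fintype ι] (b c : ℕ) (m : ι → ℕ → ℝ)
    (hdist : ∀ i, IsDist (m i)) (h0 : ∀ i, 0 < m i 0)
    (hlc : ∀ i, LogConcave (m i)) :
    LogConcave (Rop b c m) := by
  classical
  have hnn : ∀ i x, 0 ≤ m i x := fun i => (hdist i).1
  have hfin : ∀ i, (Function.support (m i)).Finite := fun i => (hdist i).2.1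
  have hm : ∀ i, (∀ x, 0 ≤ m i x) ∧ (Function.support (m i)).Finite ∧ LogConcave (m i) :=
    fun i => ⟨hnn i, hfin i, hlc i⟩
  have hRnum : ∀ x : ℕ, Rnum b m x = RZ m ((b : ℤ) - x) := by
    intro x
    rw [Rnum, RZ]
    apply tsum_congr
    intro y
    congr 1
    have hcast : ((∑ i, (y i : ℤ))) = (((∑ i, y i : ℕ)) : ℤ) := by push_cast; ring
    have : ((∑ i, y i) + x ≤ b) ↔ ((∑ i, (y i : ℤ)) ≤ (b : ℤ) - x) := by
      rw [hcast]
      omega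
    simp only [eq_iff_iff]
    exact this
  have hLC2 : LC2 (RZ m) := RZ_LC2 ι m hm
  have hRZnn : ∀ t, 0 ≤ RZ m t := RZ_nonneg m hnn
  have hRZpos : ∀ t : ℤ, 0 ≤ t → 0 < RZ m t := fun t ht => RZ_pos m hnn hfin h0 t ht
  set Z : ℝ := ∑ t ∈ Finset.range (c + 1), Rnum b m t with hZ
  have hZpos : 0 < Z := by
    rw [hZ]
    apply Finset.sum_pos'
    · intro t _
      rw [hRnum t]
      exact hRZnn _
    · refine ⟨0, Finset.mem_range.mpr (by omega), ?_⟩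
      rw [hRnum 0]
      exact hRZpos _ (by simp)
  have hRop : ∀ x : ℕ, Rop b c m x = (if x ≤ c then RZ m ((b:ℤ) - x) else 0) / Z := by
    intro x
    rw [Rop, ← hZ, hRnum x]
  constructor
  · -- SuppInterval
    intro i j k hij hjk hi hk
    rw [hRop k] at hk
    rw [hRop j]
    have hkc : k ≤ c := by
      by_contra h
      rw [if_neg h] at hk
      simp at hk
    rw [if_pos hkc] at hk
    have hkb : (k : ℤ) ≤ b := by
      by_contra h
      exact hk (by rw [RZ_neg m _ (by omega)]; simp)
    rw [if_pos (le_trans hjk hkc)]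
    apply div_ne_zero _ hZpos.ne'
    exact (hRZpos _ (by omega)).ne'
  · -- log-concavity inequality
    intro i
    by_cases hic : i + 2 ≤ c
    · rw [hRop i, hRop (i+1), hRop (i+2),
        if_pos (by omega : i ≤ c), if_pos (by omega : i + 1 ≤ c), if_pos hic]
      rw [div_mul_div_comm, div_pow, show Z * Z = Z ^ 2 from by ring]
      apply div_le_div_of_nonneg_right ?_ (by positivity)
      have h := hLC2 ((b:ℤ) - (i+2)) ((b:ℤ) - (i+1)) ((b:ℤ) - (i+1)) ((b:ℤ) - i)
        (by push_cast; ring) (by push_cast; omega) (by push_cast; omega)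
      have e1 : ((b:ℤ) - (i+1)) = (b:ℤ) - ((i:ℕ)+1:ℕ) := by push_cast; ring
      have e2 : ((b:ℤ) - (i+2)) = (b:ℤ) - ((i:ℕ)+2:ℕ) := by push_cast; ring
      rw [e1, e2] at h
      calc RZ m ((b:ℤ) - i) * RZ m ((b:ℤ) - ((i:ℕ)+2:ℕ))
          = RZ m ((b:ℤ) - ((i:ℕ)+2:ℕ)) * RZ m ((b:ℤ) - i) := by ring
        _ ≤ RZ m ((b:ℤ) - ((i:ℕ)+1:ℕ)) * RZ m ((b:ℤ) - ((i:ℕ)+1:ℕ)) := h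
        _ = RZ m ((b:ℤ) - ((i:ℕ)+1:ℕ)) ^ 2 := by ring
    · rw [hRop (i+2), if_neg hic]
      rw [zero_div, mul_zero]
      positivity
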